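/- Let N > 2s with s ∈ (0,1), and let g : ℝ → ℝ satisfy (g1), (g2) with constant m > 0, and (g3). Define, for t ≥ 0, g₁(t) = max(g(t)+mt, 0) and g₂(t) = g₁(t) − g(t), extended oddly to t < 0. Then for every ε > 0 there exists C_ε > 0 such that g₁(t) ≤ C_ε t^{2*_s−1} + ε g₂(t) for all t ≥ 0. -/
import Mathlib


open MeasureTheory Filter Topology ENNReal

/-- `g₁(t) = (g(t) + m t)⁺` for `t ≥ 0`, extended as an odd function for `t < 0`. -/
noncomputable def gOne (g : ℝ → ℝ) (m : ℝ) (t : ℝ) : ℝ :=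
  if 0 ≤ t then max (g t + m * t) 0 else -(max (g (-t) + m * (-t)) 0)

/-- `g₂ = g₁ − g` (which is the odd extension of `g₁(t) − g(t)`, `t ≥ 0`, since `g` is odd). -/
noncomputable def gTwo (g : ℝ → ℝ) (m : ℝ) (t : ℝ) : ℝ := gOne g m t - g t

/-- for every `ε > 0` there is `C_ε > 0` with
`g₁(t) ≤ C_ε t^{2*_s−1} + ε g₂(t)` for all `t ≥ 0`. -/
theorem gOne_le_of_gTwo
    (N : ℕ) (s : ℝ) (hs : s ∈ Set.Ioo (0:ℝ) 1) (hNs : 2 * s < N)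
    (g : ℝ → ℝ) (m : ℝ)
-- (g1)
    (hg1 : ContDiff ℝ 1 g) (hodd : ∀ t, g (-t) = -g t)
    -- (g2)
    (hm : 0 < m)
    (hg2a : ⊥ < Filter.liminf (fun t : ℝ => ((g t / t : ℝ) : EReal)) (𝓝[>] (0:ℝ)))
    (hg2b : Filter.liminf (fun t : ℝ => ((g t / t : ℝ) : EReal)) (𝓝[>] (0:ℝ)) ≤
        Filter.limsup (fun t : ℝ => ((g t / t : ℝ) : EReal)) (𝓝[>] (0:ℝ)))
    (hg2c : Filter.limsup (fun t : ℝ => ((g t / t : ℝ) : EReal)) (𝓝[>] (0:ℝ))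
        = ((-m : ℝ) : EReal))
-- (g3)
    (hg3top : Tendsto (fun t : ℝ => |g t| / |t| ^ (2 * (N:ℝ) / ((N:ℝ) - 2*s) - 1))
        atTop (𝓝 0))
    (hg3bot : Tendsto (fun t : ℝ => |g t| / |t| ^ (2 * (N:ℝ) / ((N:ℝ) - 2*s) - 1))
        atBot (𝓝 0)) :
    ∀ ε : ℝ, 0 < ε → ∃ C : ℝ, 0 < C ∧ ∀ t : ℝ, 0 ≤ t →
      gOne g m t ≤ C * t ^ (2 * (N:ℝ) / ((N:ℝ) - 2*s) - 1) + ε * gTwo g m t := by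
  intro ε hε
  have hs0 : 0 < s := hs.1
  have hden : (0:ℝ) < (N:ℝ) - 2*s := by linarith
  set p : ℝ := 2 * (N:ℝ) / ((N:ℝ) - 2*s) - 1 with hpdef
  have hp1 : 1 < p := by
    have h2 : 2 < 2 * (N:ℝ) / ((N:ℝ) - 2*s) := by
      rw [lt_div_iff₀ hden]; nlinarith
    simp only [hpdef]; linarith
  have hp0 : 0 < p := by linarith
  have g0 : g 0 = 0 := by
    have := hodd 0; simp at this; linarith
  have h2 : ∀ t : ℝ, 0 ≤ t → m * t ≤ gTwo g m t := by
    intro t ht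
    simp only [gTwo, gOne, if_pos ht]
    have := le_max_left (g t + m * t) 0
    linarith
  -- near zero
  have hlim : ∀ᶠ t in 𝓝[>] (0:ℝ), ((g t / t : ℝ) : EReal) < ((ε*m - m : ℝ) : EReal) := by
    apply Filter.eventually_lt_of_limsup_lt
    · rw [hg2c]
      exact_mod_cast (by nlinarith : (-m:ℝ) < ε*m - m)
    · exact Filter.isBounded_le_of_top
  obtain ⟨δ, hδmem, hδsub⟩ := mem_nhdsGT_iff_exists_Ioo_subset.mp hlim
  have hδ : (0:ℝ) < δ := hδmem
  have hnear : ∀ t : ℝ, 0 < t → t < δ → g t + m*t ≤ ε*m*t := by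
    intro t ht htδ
    have hmem : t ∈ Set.Ioo (0:ℝ) δ := ⟨ht, htδ⟩
    have h1 : ((g t / t : ℝ) : EReal) < ((ε*m - m : ℝ) : EReal) := hδsub hmem
    have h1' : g t / t < ε*m - m := by exact_mod_cast h1
    have h2' : g t < (ε*m - m) * t := (div_lt_iff₀ ht).mp h1'
    nlinarith
  -- at infinity
  obtain ⟨T0, hT0⟩ := Filter.eventually_atTop.mp (hg3top.eventually (gt_mem_nhds hm))
  set T : ℝ := max T0 1 with hTdef
  have hT1 : (1:ℝ) ≤ T := le_max_right _ _
  obtain ⟨M, hM⟩ := (isCompact_Icc (a := δ) (b := T)).exists_bound_of_continuousOn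
    hg1.continuous.continuousOn
  refine ⟨max ((M + m*T) / δ^p) (2*m), lt_max_of_lt_right (by positivity), ?_⟩
  set C : ℝ := max ((M + m*T) / δ^p) (2*m) with hCdef
  have hC2m : 2*m ≤ C := le_max_right _ _
  have hCpos : 0 < C := lt_of_lt_of_le (by positivity) hC2m
  intro t ht
  rcases eq_or_lt_of_le ht with h0 | htpos
  · -- t = 0
    rw [← h0]
    simp [gOne, gTwo, g0, Real.zero_rpow hp0.ne']
  · have hg1t : gOne g m t = max (g t + m*t) 0 := by simp [gOne, ht]
    have h2t := h2 t ht
    have hg2nn : 0 ≤ gTwo g m t := le_trans (by positivity) h2t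
    have htp : 0 ≤ t ^ p := Real.rpow_nonneg ht p
    have hεg2 : 0 ≤ ε * gTwo g m t := mul_nonneg hε.le hg2nn
    by_cases hlt : t < δ
    · -- small t
      have hn := hnear t htpos hlt
      have hb : gOne g m t ≤ ε * (m * t) := by
        rw [hg1t]
        exact max_le (by nlinarith) (by positivity)
      have hb2 : ε * (m * t) ≤ ε * gTwo g m t := mul_le_mul_of_nonneg_left h2t hε.le
      have hCtp : 0 ≤ C * t ^ p := mul_nonneg hCpos.le htp
      linarith
    · push_neg at hlt
      by_cases hle : t ≤ T
      · -- middle range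
        have hMt : |g t| ≤ M := by
          have := hM t ⟨hlt, hle⟩
          simpa [Real.norm_eq_abs] using this
        have hM0 : (0:ℝ) ≤ M := le_trans (abs_nonneg _) hMt
        have hbd : gOne g m t ≤ M + m*T := by
          rw [hg1t]
          have h1 : g t ≤ |g t| := le_abs_self _
          have h2' : m*t ≤ m*T := by nlinarith
          exact max_le (by linarith) (by nlinarith)
        have hδp : (0:ℝ) < δ ^ p := Real.rpow_pos_of_pos hδ p
        have hδtp : δ ^ p ≤ t ^ p := Real.rpow_le_rpow hδ.le hlt hp0.le
        have hA : (M + m*T) / δ^p ≤ C := le_max_left _ _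
        have hMT0 : (0:ℝ) ≤ M + m*T := by nlinarith
        have key : M + m*T ≤ C * t ^ p := by
          have e1 : M + m*T = ((M + m*T) / δ^p) * δ^p := by
            field_simp
          calc M + m*T = ((M + m*T) / δ^p) * δ^p := e1
            _ ≤ ((M + m*T) / δ^p) * t^p := by
                apply mul_le_mul_of_nonneg_left hδtp (by positivity)
            _ ≤ C * t^p := mul_le_mul_of_nonneg_right hA htp
        linarith
      · -- large t
        push_neg at hle
        have h1t : (1:ℝ) ≤ t := le_trans hT1 hle.le
        have htT0 : T0 ≤ t := le_trans (le_max_left _ _) hle.le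
        have habs : |t| = t := abs_of_nonneg ht
        have hgb : |g t| / |t| ^ p < m := hT0 t htT0
        have htpp : (0:ℝ) < t ^ p := Real.rpow_pos_of_pos htpos p
        have hgb' : |g t| < m * t ^ p := by
          rw [habs] at hgb
          exact (div_lt_iff₀ htpp).mp hgb
        have http : t ≤ t ^ p := by
          calc t = t ^ (1:ℝ) := (Real.rpow_one t).symm
            _ ≤ t ^ p := Real.rpow_le_rpow_of_exponent_le h1t hp1.le
        have hbd : gOne g m t ≤ 2*m * t ^ p := by
          rw [hg1t]
          have h1 : g t ≤ |g t| := le_abs_self _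
          have h2' : m * t ≤ m * t ^ p := mul_le_mul_of_nonneg_left http hm.le
          have h3 : (0:ℝ) ≤ 2*m*t^p := by positivity
          exact max_le (by linarith) h3
        have hfin : 2*m * t^p ≤ C * t^p := mul_le_mul_of_nonneg_right hC2m htp
        linarith
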